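/- If an even nondegenerate lattice S of signature (t_+, t_-) admits a primitive embedding into an even unimodular lattice L of signature (l_+, l_-), then t_+ ≤ l_+, t_- ≤ l_-, and the minimal number of generators l(A_S) of the discriminant group A_S = S^*/S satisfies l(A_S) ≤ (l_+ + l_-) − (t_+ + t_-). -/

import Mathlib

open Matrix

/-- The bilinear form on `ℚ^n` given by an integer Gram matrix `G`. -/
def bilin {n : ℕ} (G : Matrix (Fin n) (Fin n) ℤ) (x y : Fin n → ℚ) : ℚ :=
  x ⬝ᵥ (G.map (Int.cast : ℤ → ℚ)).mulVec y

/-- The standard lattice `ℤ^n ⊆ ℚ^n`. -/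
def latticeZ (n : ℕ) : Submodule ℤ (Fin n → ℚ) :=
  Submodule.span ℤ (Set.range fun i : Fin n => (Pi.single i 1 : Fin n → ℚ))

/-- Vectors of `ℚ^n` pairing integrally with every element of `S`. -/
def integDual {n : ℕ} (G : Matrix (Fin n) (Fin n) ℤ) (S : Submodule ℤ (Fin n → ℚ)) :
    Submodule ℤ (Fin n → ℚ) where
  carrier := {x | ∀ y ∈ S, ∃ m : ℤ, bilin G x y = (m : ℚ)}
  add_mem' := by
    intro a b ha hb y hy
    obtain ⟨m₁, h₁⟩ := ha y hy
    obtain ⟨m₂, h₂⟩ := hb y hy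
    refine ⟨m₁ + m₂, ?_⟩
    simp only [bilin] at h₁ h₂ ⊢
    rw [add_dotProduct, h₁, h₂]
    push_cast
    ring
  zero_mem' := by
    intro y hy
    exact ⟨0, by simp [bilin]⟩
  smul_mem' := by
    intro c x hx y hy
    obtain ⟨m, h⟩ := hx y hy
    refine ⟨c * m, ?_⟩
    simp only [bilin] at h ⊢
    rw [smul_dotProduct, h, zsmul_eq_mul]
    push_cast
    ring

/-- The dual lattice `S^* = {x ∈ S ⊗ ℚ : (x, S) ⊆ ℤ}` of a sublattice `S ⊆ ℚ^n`,
with respect to the bilinear form with Gram matrix `G`. -/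
def dualOf {n : ℕ} (G : Matrix (Fin n) (Fin n) ℤ) (S : Submodule ℤ (Fin n → ℚ)) :
    Submodule ℤ (Fin n → ℚ) :=
  (Submodule.span ℚ (S : Set (Fin n → ℚ))).restrictScalars ℤ ⊓ integDual G S

/-- The discriminant group `A_S = S^*/S`. -/
abbrev discOf {n : ℕ} (G : Matrix (Fin n) (Fin n) ℤ) (S : Submodule ℤ (Fin n → ℚ)) :=
  (dualOf G S) ⧸ (S.comap (dualOf G S).subtype)

/-- The minimal number of generators of an abelian group. -/
noncomputable def minGens (A : Type*) [AddCommGroup A] : ℕ :=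
  sInf {k : ℕ | ∃ f : Fin k → A, AddSubgroup.closure (Set.range f) = ⊤}


-- cast of vector
def castv {k : ℕ} (w : Fin k → ℤ) : Fin k → ℚ := fun i => (w i : ℚ)

lemma castv_add {k : ℕ} (w v : Fin k → ℤ) : castv (w + v) = castv w + castv v := by
  funext i; simp [castv]

lemma castv_smul {k : ℕ} (c : ℤ) (w : Fin k → ℤ) : castv (c • w) = (c : ℚ) • castv w := by
  funext i; simp [castv]

lemma castv_inj {k : ℕ} : Function.Injective (castv (k := k)) := by
  intro a b h
  funext i
  have := congrFun h i
  simp only [castv, Int.cast_inj] at this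
  exact this

lemma cast_mulVec {k l : ℕ} (A : Matrix (Fin k) (Fin l) ℤ) (w : Fin l → ℤ) :
    (A.map (Int.cast : ℤ → ℚ)).mulVec (castv w) = castv (A.mulVec w) := by
  funext i
  simp [Matrix.mulVec, dotProduct, castv, Matrix.map_apply]

lemma mem_latticeZ_iff {n : ℕ} (v : Fin n → ℚ) :
    v ∈ latticeZ n ↔ ∃ w : Fin n → ℤ, v = castv w := by
  constructor
  · intro hv
    induction hv using Submodule.span_induction with
    | mem x hx =>
      obtain ⟨i, rfl⟩ := hx
      exact ⟨Pi.single i 1, by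
        funext j
        simp [castv, Pi.single_apply, apply_ite (Int.cast : ℤ → ℚ)]⟩
    | zero => exact ⟨0, by funext j; simp [castv]⟩
    | add x y _ _ hx hy =>
      obtain ⟨w1, rfl⟩ := hx; obtain ⟨w2, rfl⟩ := hy
      exact ⟨w1 + w2, (castv_add w1 w2).symm⟩
    | smul c x _ hx =>
      obtain ⟨w, rfl⟩ := hx
      exact ⟨c • w, by rw [castv_smul]; funext j; simp [castv]⟩
  · rintro ⟨w, rfl⟩
    have : castv w = ∑ i, w i • (Pi.single i 1 : Fin n → ℚ) := by
      funext j
      simp [castv, Finset.sum_apply, Pi.single_apply]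
    rw [this]
    exact Submodule.sum_mem _ fun i _ =>
      Submodule.smul_mem _ _ (Submodule.subset_span ⟨i, rfl⟩)

lemma cast_dot {k : ℕ} (u w : Fin k → ℤ) :
    castv u ⬝ᵥ castv w = ((u ⬝ᵥ w : ℤ) : ℚ) := by
  simp [castv, dotProduct]

lemma bilin_eq {n : ℕ} (G : Matrix (Fin n) (Fin n) ℤ) (x y : Fin n → ℚ) :
    bilin G x y = ((G.map (Int.cast : ℤ → ℚ))ᵀ.mulVec x) ⬝ᵥ y := by
  rw [bilin, Matrix.dotProduct_mulVec]
  congr 1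
  rw [← Matrix.vecMul_transpose, Matrix.transpose_transpose]

lemma span_latticeZ_top {n : ℕ} :
    Submodule.span ℚ ((latticeZ n : Submodule ℤ (Fin n → ℚ)) : Set (Fin n → ℚ)) = ⊤ := by
  rw [eq_top_iff]
  intro v _
  have hv : v = ∑ i, v i • (Pi.single i 1 : Fin n → ℚ) := by
    have h : ∀ i : Fin n, v i • (Pi.single i 1 : Fin n → ℚ) = Pi.single i (v i) := by
      intro i; rw [← Pi.single_smul, smul_eq_mul, mul_one]
    rw [Finset.sum_congr rfl fun i _ => h i, Finset.univ_sum_single]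
  rw [hv]
  refine Submodule.sum_mem _ fun i _ => Submodule.smul_mem _ _ (Submodule.subset_span ?_)
  exact Submodule.subset_span ⟨i, rfl⟩

lemma mem_dualOf_iff {n : ℕ} (G : Matrix (Fin n) (Fin n) ℤ) (x : Fin n → ℚ) :
    x ∈ dualOf G (latticeZ n) ↔
      ∃ u : Fin n → ℤ, (G.map (Int.cast : ℤ → ℚ))ᵀ.mulVec x = castv u := by
  constructor
  · rintro ⟨-, hx2⟩
    have h : ∀ i : Fin n, ∃ m : ℤ, ((G.map (Int.cast : ℤ → ℚ))ᵀ.mulVec x) i = (m : ℚ) := by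
      intro i
      have hy : (Pi.single i 1 : Fin n → ℚ) ∈ latticeZ n := Submodule.subset_span ⟨i, rfl⟩
      obtain ⟨m, hm⟩ := hx2 _ hy
      refine ⟨m, ?_⟩
      rw [bilin_eq, dotProduct_single, mul_one] at hm
      exact hm
    exact ⟨fun i => (h i).choose, funext fun i => (h i).choose_spec⟩
  · rintro ⟨u, hu⟩
    constructor
    · show x ∈ Submodule.span ℚ _
      rw [span_latticeZ_top]; trivial
    · intro y hy
      obtain ⟨w, rfl⟩ := (mem_latticeZ_iff y).mp hy
      refine ⟨u ⬝ᵥ w, ?_⟩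
      rw [bilin_eq, hu, cast_dot]

lemma quad_congr {a b : ℕ} (C : Matrix (Fin a) (Fin b) ℝ) (D : Matrix (Fin a) (Fin a) ℝ)
    (v : Fin b → ℝ) :
    v ⬝ᵥ (Cᵀ * D * C).mulVec v = (C.mulVec v) ⬝ᵥ (D.mulVec (C.mulVec v)) := by
  rw [← Matrix.mulVec_mulVec, ← Matrix.mulVec_mulVec, Matrix.dotProduct_mulVec,
    Matrix.vecMul_transpose]

lemma quad_diag {a : ℕ} (d : Fin a → ℝ) (w : Fin a → ℝ) :
    w ⬝ᵥ (Matrix.diagonal d).mulVec w = ∑ i, d i * w i ^ 2 := by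
  simp only [Matrix.mulVec_diagonal, dotProduct]
  congr 1; funext i; ring

lemma quad_sgn {p q : ℕ} (w : Fin (p + q) → ℝ) :
    w ⬝ᵥ (Matrix.diagonal fun i : Fin (p + q) => if (i : ℕ) < p then (1 : ℝ) else -1).mulVec w
      = ∑ i : Fin p, w (Fin.castAdd q i) ^ 2 - ∑ i : Fin q, w (Fin.natAdd p i) ^ 2 := by
  rw [quad_diag, Fin.sum_univ_add]
  have h1 : ∀ i : Fin p, ((Fin.castAdd q i : Fin (p+q)) : ℕ) < p := fun i => by
    simp [Fin.coe_castAdd, i.isLt]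
  have h2 : ∀ i : Fin q, ¬ ((Fin.natAdd p i : Fin (p+q)) : ℕ) < p := fun i => by
    simp [Fin.coe_natAdd]
  simp only [h1, h2, if_pos, if_neg, if_true, if_false, one_mul, neg_one_mul]
  simp [Finset.sum_neg_distrib, sub_eq_add_neg]

lemma append_add {p q : ℕ} (x y : Fin p → ℝ) (u v : Fin q → ℝ) :
    Fin.append (x + y) (u + v) = Fin.append x u + Fin.append y v := by
  funext j
  refine Fin.addCases (fun i => ?_) (fun i => ?_) j <;>
    simp [Fin.append_left, Fin.append_right]

lemma append_smul {p q : ℕ} (c : ℝ) (x : Fin p → ℝ) (u : Fin q → ℝ) :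
    Fin.append (c • x) (c • u) = c • Fin.append x u := by
  funext j
  refine Fin.addCases (fun i => ?_) (fun i => ?_) j <;>
    simp [Fin.append_left, Fin.append_right]

lemma sig_le {p q p' q' : ℕ} (C : Matrix (Fin (p' + q')) (Fin (p + q)) ℝ)
    (h : Cᵀ * (Matrix.diagonal fun i : Fin (p' + q') => if (i : ℕ) < p' then (1 : ℝ) else -1) * C
       = Matrix.diagonal fun i : Fin (p + q) => if (i : ℕ) < p then (1 : ℝ) else -1) :
    p ≤ p' ∧ q ≤ q' := by
  have key : ∀ v : Fin (p + q) → ℝ,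
      ∑ i : Fin p', C.mulVec v (Fin.castAdd q' i) ^ 2
        - ∑ i : Fin q', C.mulVec v (Fin.natAdd p' i) ^ 2
      = ∑ i : Fin p, v (Fin.castAdd q i) ^ 2 - ∑ i : Fin q, v (Fin.natAdd p i) ^ 2 := by
    intro v
    rw [← quad_sgn, ← quad_sgn, ← quad_congr, h]
  constructor
  · -- p ≤ p'
    let f : (Fin p → ℝ) →ₗ[ℝ] (Fin p' → ℝ) :=
      { toFun := fun x i => C.mulVec (Fin.append x (0 : Fin q → ℝ)) (Fin.castAdd q' i)
        map_add' := by
          intro x y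
          have hap : Fin.append (x + y) (0 : Fin q → ℝ) = Fin.append x 0 + Fin.append y 0 := by
            have := append_add x y (0 : Fin q → ℝ) 0
            rwa [add_zero] at this
          funext i
          simp only [hap, Matrix.mulVec_add, Pi.add_apply]
        map_smul' := by
          intro c x
          have hap : Fin.append (c • x) (0 : Fin q → ℝ) = c • Fin.append x 0 := by
            have := append_smul c x (0 : Fin q → ℝ)
            rwa [smul_zero] at this
          funext i
          simp only [hap, Matrix.mulVec_smul, Pi.smul_apply, RingHom.id_apply] }
    have hinj : Function.Injective f := by
      rw [← LinearMap.ker_eq_bot, LinearMap.ker_eq_bot']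
      intro x hx
      have hx' : ∀ i : Fin p', C.mulVec (Fin.append x (0 : Fin q → ℝ)) (Fin.castAdd q' i) = 0 :=
        fun i => congrFun hx i
      have hk := key (Fin.append x (0 : Fin q → ℝ))
      simp only [hx', Fin.append_left, Fin.append_right] at hk
      -- hk : 0 - Σ (...)² = Σ x i² - Σ 0²
      have h1 : (0 : ℝ) ≤ ∑ i : Fin q', C.mulVec (Fin.append x (0 : Fin q → ℝ)) (Fin.natAdd p' i) ^ 2 :=
        Finset.sum_nonneg fun i _ => sq_nonneg _
      have h2 : ∑ i : Fin p, x i ^ 2 ≤ 0 := by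
        simp only [Pi.zero_apply, ne_eq, OfNat.ofNat_ne_zero, not_false_eq_true, zero_pow,
          Finset.sum_const_zero, sub_zero, zero_sub] at hk
        rw [← hk]
        linarith
      have h3 : ∀ i ∈ Finset.univ, x i ^ 2 = 0 := by
        rw [← Finset.sum_eq_zero_iff_of_nonneg fun i _ => sq_nonneg (x i)]
        have h4 : (0:ℝ) ≤ ∑ i : Fin p, x i ^ 2 := Finset.sum_nonneg fun i _ => sq_nonneg _
        linarith
      funext i
      exact pow_eq_zero_iff (by norm_num) |>.mp (h3 i (Finset.mem_univ i))
    calc p = Module.finrank ℝ (Fin p → ℝ) := (Module.finrank_fin_fun ℝ).symm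
      _ ≤ Module.finrank ℝ (Fin p' → ℝ) := LinearMap.finrank_le_finrank_of_injective hinj
      _ = p' := Module.finrank_fin_fun ℝ
  · -- q ≤ q'
    let f : (Fin q → ℝ) →ₗ[ℝ] (Fin q' → ℝ) :=
      { toFun := fun x i => C.mulVec (Fin.append (0 : Fin p → ℝ) x) (Fin.natAdd p' i)
        map_add' := by
          intro x y
          have hap : Fin.append (0 : Fin p → ℝ) (x + y) = Fin.append (0 : Fin p → ℝ) x + Fin.append (0 : Fin p → ℝ) y := by
            have := append_add (0 : Fin p → ℝ) 0 x y
            rwa [add_zero] at this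
          funext i
          simp only [hap, Matrix.mulVec_add, Pi.add_apply]
        map_smul' := by
          intro c x
          have hap : Fin.append (0 : Fin p → ℝ) (c • x) = c • Fin.append (0 : Fin p → ℝ) x := by
            have := append_smul c (0 : Fin p → ℝ) x
            rwa [smul_zero] at this
          funext i
          simp only [hap, Matrix.mulVec_smul, Pi.smul_apply, RingHom.id_apply] }
    have hinj : Function.Injective f := by
      rw [← LinearMap.ker_eq_bot, LinearMap.ker_eq_bot']
      intro x hx
      have hx' : ∀ i : Fin q', C.mulVec (Fin.append (0 : Fin p → ℝ) x) (Fin.natAdd p' i) = 0 :=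
        fun i => congrFun hx i
      have hk := key (Fin.append (0 : Fin p → ℝ) x)
      simp only [hx', Fin.append_left, Fin.append_right] at hk
      have h1 : (0 : ℝ) ≤ ∑ i : Fin p', C.mulVec (Fin.append (0 : Fin p → ℝ) x) (Fin.castAdd q' i) ^ 2 :=
        Finset.sum_nonneg fun i _ => sq_nonneg _
      have h2 : ∑ i : Fin q, x i ^ 2 ≤ 0 := by
        simp only [Pi.zero_apply, ne_eq, OfNat.ofNat_ne_zero, not_false_eq_true, zero_pow,
          Finset.sum_const_zero, sub_zero, zero_sub] at hk
        linarith
      have h3 : ∀ i ∈ Finset.univ, x i ^ 2 = 0 := by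
        rw [← Finset.sum_eq_zero_iff_of_nonneg fun i _ => sq_nonneg (x i)]
        have h4 : (0:ℝ) ≤ ∑ i : Fin q, x i ^ 2 := Finset.sum_nonneg fun i _ => sq_nonneg _
        linarith
      funext i
      exact pow_eq_zero_iff (by norm_num) |>.mp (h3 i (Finset.mem_univ i))
    calc q = Module.finrank ℝ (Fin q → ℝ) := (Module.finrank_fin_fun ℝ).symm
      _ ≤ Module.finrank ℝ (Fin q' → ℝ) := LinearMap.finrank_le_finrank_of_injective hinj
      _ = q' := Module.finrank_fin_fun ℝ

lemma map_cast_eq {k l : ℕ} (A : Matrix (Fin k) (Fin l) ℤ) :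
    A.map (Int.cast : ℤ → ℚ) = A.map (Int.castRingHom ℚ) := rfl

lemma map_cast_eqR {k l : ℕ} (A : Matrix (Fin k) (Fin l) ℤ) :
    A.map (Int.cast : ℤ → ℝ) = A.map (Int.castRingHom ℝ) := rfl

lemma minGens_le_of_embedding {n N : ℕ}
    (GrS : Matrix (Fin n) (Fin n) ℤ) (GrL : Matrix (Fin N) (Fin N) ℤ)
    (M : Matrix (Fin N) (Fin n) ℤ)
    (hGrSsymm : GrS.IsSymm)
    (hSnd : GrS.det ≠ 0) (hLdet : IsUnit GrL.det)
    (hM : Mᵀ * GrL * M = GrS)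
    (hprim : ∀ (v : Fin N → ℤ) (k : ℤ), k ≠ 0 →
        (∃ w, M.mulVec w = k • v) → ∃ w, M.mulVec w = v) :
    minGens (discOf GrS (latticeZ n)) ≤ N - n := by
  classical
  set GrSQ := GrS.map (Int.cast : ℤ → ℚ) with hGrSQdef
  set GrLQ := GrL.map (Int.cast : ℤ → ℚ) with hGrLQdef
  set MQ := M.map (Int.cast : ℤ → ℚ) with hMQdef
  have hcast : MQᵀ * GrLQ * MQ = GrSQ := by
    rw [hGrSQdef, hGrLQdef, hMQdef, ← hM]
    simp only [map_cast_eq]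
    rw [Matrix.map_mul, Matrix.map_mul, Matrix.transpose_map]
  have hdetQ : IsUnit GrSQ.det := by
    rw [hGrSQdef, map_cast_eq]
    rw [show (GrS.map (Int.castRingHom ℚ)).det = ((GrS.det : ℤ) : ℚ) from
      (RingHom.map_det (Int.castRingHom ℚ) GrS).symm]
    simpa using hSnd
  -- M injective over ℤ
  have hMVL : ∀ w : Fin n → ℤ, (M.mulVecLin : (Fin n → ℤ) →ₗ[ℤ] (Fin N → ℤ)) w = M.mulVec w :=
    fun w => rfl
  have hMinj : Function.Injective (M.mulVecLin : (Fin n → ℤ) →ₗ[ℤ] (Fin N → ℤ)) := by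
    rw [← LinearMap.ker_eq_bot, LinearMap.ker_eq_bot']
    intro w hw
    rw [hMVL] at hw
    have h1 : GrS.mulVec w = 0 := by
      rw [← hM, ← Matrix.mulVec_mulVec, ← Matrix.mulVec_mulVec, hw]
      simp
    have h2 : GrSQ.mulVec (castv w) = 0 := by
      rw [hGrSQdef, cast_mulVec, h1]
      funext i; simp [castv]
    have h3 : castv w = 0 := by
      have h4 := congrArg (fun v => GrSQ⁻¹.mulVec v) h2
      simpa [Matrix.mulVec_mulVec, Matrix.nonsing_inv_mul _ hdetQ] using h4
    apply castv_inj
    rw [h3]; funext i; simp [castv]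
  -- the image of M and its Smith normal form
  set R := LinearMap.range (M.mulVecLin : (Fin n → ℤ) →ₗ[ℤ] (Fin N → ℤ)) with hRdef
  obtain ⟨r, snf⟩ := Submodule.smithNormalForm (Pi.basisFun ℤ (Fin N)) R
  have hrn : r = n := by
    let bR : Module.Basis (Fin n) ℤ R := (Pi.basisFun ℤ (Fin n)).map (LinearEquiv.ofInjective _ hMinj)
    have e := snf.bN.indexEquiv bR
    simpa using Fintype.card_congr e
  -- the basis vectors hit by f lie in R, via primitivity
  have hmemR : ∀ i : Fin r, snf.bM (snf.f i) ∈ R := by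
    intro i
    have h0 : (snf.bN i : Fin N → ℤ) ∈ R := (snf.bN i).2
    have h1 : (snf.bN i : Fin N → ℤ) = snf.a i • snf.bM (snf.f i) := snf.snf i
    have ha0 : snf.a i ≠ 0 := by
      intro h
      apply snf.bN.ne_zero i
      apply Subtype.ext
      rw [h1, h, zero_smul]
      rfl
    obtain ⟨w, hw⟩ := h0
    rw [hMVL] at hw
    obtain ⟨w', hw'⟩ := hprim (snf.bM (snf.f i)) (snf.a i) ha0 ⟨w, by rw [hw, h1]⟩
    exact ⟨w', by rw [hMVL, hw']⟩
  have haunit : ∀ i : Fin r, IsUnit (snf.a i) := by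
    intro i
    have h1 : snf.bN i = snf.a i • (⟨snf.bM (snf.f i), hmemR i⟩ : R) := by
      apply Subtype.ext
      rw [snf.snf i]
      rfl
    have h2 : snf.a i * (snf.bN.repr ⟨snf.bM (snf.f i), hmemR i⟩) i = 1 := by
      have h3 : snf.bN.repr (snf.a i • (⟨snf.bM (snf.f i), hmemR i⟩ : R)) i
          = snf.bN.repr (snf.bN i) i := by rw [← h1]
      rw [Module.Basis.repr_self, Finsupp.single_eq_same] at h3
      rw [← h3, LinearEquiv.map_smul, Finsupp.smul_apply, smul_eq_mul]
    exact IsUnit.of_mul_eq_one _ h2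
  -- surjectivity of Mᵀ on integer vectors
  have hTsurj : ∀ u : Fin n → ℤ, ∃ z : Fin N → ℤ, Mᵀ.mulVec z = u := by
    intro u
    let du : (Fin n → ℤ) →ₗ[ℤ] ℤ :=
      { toFun := fun w => u ⬝ᵥ w
        map_add' := fun a b => by simp [dotProduct_add]
        map_smul' := fun c a => by
          show u ⬝ᵥ (c • a) = c * (u ⬝ᵥ a)
          rw [dotProduct_smul, smul_eq_mul] }
    let eR : (Fin n → ℤ) ≃ₗ[ℤ] R := LinearEquiv.ofInjective _ hMinj
    let μ : R →ₗ[ℤ] ℤ := du ∘ₗ (eR.symm : R →ₗ[ℤ] (Fin n → ℤ))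
    let g : Fin N → ℤ := fun k =>
      if h : ∃ i, snf.f i = k then ((haunit h.choose).unit⁻¹ : ℤˣ) * μ (snf.bN h.choose) else 0
    let lam : (Fin N → ℤ) →ₗ[ℤ] ℤ := snf.bM.constr ℤ g
    have hgf : ∀ i : Fin r, lam (snf.bM (snf.f i))
        = ((haunit i).unit⁻¹ : ℤˣ) * μ (snf.bN i) := by
      intro i
      have := snf.bM.constr_basis ℤ g (snf.f i)
      rw [show lam (snf.bM (snf.f i)) = g (snf.f i) from this]
      have hex : ∃ j, snf.f j = snf.f i := ⟨i, rfl⟩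
      have hch : hex.choose = i := snf.f.injective hex.choose_spec
      simp only [g, dif_pos hex, hch]
    have hlam_bN : ∀ i : Fin r, lam ((snf.bN i : Fin N → ℤ)) = μ (snf.bN i) := by
      intro i
      have hu1 : snf.a i * (((haunit i).unit⁻¹ : ℤˣ) : ℤ) = 1 := (haunit i).mul_val_inv
      rw [snf.snf i, lam.map_smul, smul_eq_mul, hgf i]
      calc snf.a i * (((haunit i).unit⁻¹ : ℤˣ) * μ (snf.bN i))
          = (snf.a i * (((haunit i).unit⁻¹ : ℤˣ) : ℤ)) * μ (snf.bN i) := by ring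
        _ = μ (snf.bN i) := by rw [hu1, one_mul]
    have hlamR : ∀ x : R, lam (x : Fin N → ℤ) = μ x := by
      have heq : lam ∘ₗ R.subtype = μ := snf.bN.ext fun i => hlam_bN i
      intro x
      exact congrArg (fun ph => ph x) heq
    have hlamM : ∀ w : Fin n → ℤ, lam (M.mulVec w) = u ⬝ᵥ w := by
      intro w
      have hmem : M.mulVec w ∈ R := ⟨w, hMVL w⟩
      rw [show lam (M.mulVec w) = lam ((⟨M.mulVec w, hmem⟩ : R) : Fin N → ℤ) from rfl,
        hlamR ⟨M.mulVec w, hmem⟩]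
      have h5 : eR w = ⟨M.mulVec w, hmem⟩ :=
        Subtype.ext (LinearEquiv.ofInjective_apply M.mulVecLin w)
      show du (eR.symm ⟨M.mulVec w, hmem⟩) = u ⬝ᵥ w
      rw [← h5, LinearEquiv.symm_apply_apply]
      rfl
    refine ⟨fun k => lam (Pi.single k 1), ?_⟩
    funext j
    have hcol : M.mulVec (Pi.single j 1) = fun k => M k j := by
      funext k
      simp [Matrix.mulVec_single]
    have hsum : (fun k => M k j) = ∑ k, M k j • (Pi.single k (1:ℤ) : Fin N → ℤ) := by
      funext l
      simp [Finset.sum_apply, Pi.single_apply]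
    calc Mᵀ.mulVec (fun k => lam (Pi.single k 1)) j
        = ∑ k, M k j * lam (Pi.single k 1) := by
          simp [Matrix.mulVec, dotProduct, Matrix.transpose_apply]
      _ = lam (∑ k, M k j • (Pi.single k (1:ℤ) : Fin N → ℤ)) := by
          rw [map_sum]
          refine Finset.sum_congr rfl fun k _ => ?_
          rw [lam.map_smul, smul_eq_mul]
      _ = lam (M.mulVec (Pi.single j 1)) := by rw [← hsum, hcol]
      _ = u ⬝ᵥ Pi.single j 1 := hlamM _
      _ = u j := by simp
  -- the homomorphism ψ : ℤ^N → A_S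
  have hGrSQsymm : GrSQᵀ = GrSQ := by
    rw [hGrSQdef, ← Matrix.transpose_map, hGrSsymm.eq]
  let φ0 : (Fin N → ℤ) → (Fin n → ℚ) :=
    fun x => GrSQ⁻¹.mulVec (MQᵀ.mulVec (GrLQ.mulVec (castv x)))
  have hMQT : MQᵀ = (Mᵀ).map (Int.cast : ℤ → ℚ) := by
    rw [hMQdef, Matrix.transpose_map]
  have hφmem : ∀ x, φ0 x ∈ dualOf GrS (latticeZ n) := by
    intro x
    rw [mem_dualOf_iff]
    refine ⟨Mᵀ.mulVec (GrL.mulVec x), ?_⟩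
    show (GrSQ)ᵀ.mulVec (φ0 x) = _
    rw [hGrSQsymm]
    show GrSQ.mulVec (GrSQ⁻¹.mulVec (MQᵀ.mulVec (GrLQ.mulVec (castv x)))) = _
    rw [Matrix.mulVec_mulVec, Matrix.mul_nonsing_inv _ hdetQ, Matrix.one_mulVec]
    rw [hGrLQdef, cast_mulVec, hMQT, cast_mulVec]
  let DD := dualOf GrS (latticeZ n)
  let Slat := (latticeZ n).comap DD.subtype
  let φ : (Fin N → ℤ) →ₗ[ℤ] DD :=
    { toFun := fun x => ⟨φ0 x, hφmem x⟩
      map_add' := by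
        intro x y
        apply Subtype.ext
        show φ0 (x + y) = φ0 x + φ0 y
        simp only [φ0]
        rw [castv_add, Matrix.mulVec_add, Matrix.mulVec_add, Matrix.mulVec_add]
      map_smul' := by
        intro c x
        apply Subtype.ext
        show φ0 (c • x) = c • φ0 x
        simp only [φ0]
        rw [castv_smul, Matrix.mulVec_smul, Matrix.mulVec_smul, Matrix.mulVec_smul]
        rw [Int.cast_smul_eq_zsmul] }
  let ψ : (Fin N → ℤ) →ₗ[ℤ] (discOf GrS (latticeZ n)) := Slat.mkQ ∘ₗ φ
  have hψ : ∀ x, ψ x = Slat.mkQ ⟨φ0 x, hφmem x⟩ := fun x => rfl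
  -- kernel contains the image of M
  have hker : ∀ w : Fin n → ℤ, ψ (M.mulVec w) = 0 := by
    intro w
    have hid : GrSQ⁻¹ * MQᵀ * GrLQ * MQ = 1 := by
      rw [Matrix.mul_assoc GrSQ⁻¹ MQᵀ GrLQ, Matrix.mul_assoc GrSQ⁻¹ (MQᵀ * GrLQ) MQ, hcast,
        Matrix.nonsing_inv_mul _ hdetQ]
    have hφ : φ0 (M.mulVec w) = castv w := by
      simp only [φ0]
      rw [← cast_mulVec M w]
      show GrSQ⁻¹.mulVec (MQᵀ.mulVec (GrLQ.mulVec (MQ.mulVec (castv w)))) = castv w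
      rw [Matrix.mulVec_mulVec, Matrix.mulVec_mulVec, Matrix.mulVec_mulVec, hid,
        Matrix.one_mulVec]
    rw [hψ, Submodule.mkQ_apply, Submodule.Quotient.mk_eq_zero]
    show φ0 (M.mulVec w) ∈ latticeZ n
    rw [hφ]
    exact (mem_latticeZ_iff _).mpr ⟨w, rfl⟩
  -- surjectivity of ψ
  have hsurj : Function.Surjective ψ := by
    intro d
    obtain ⟨⟨s, hs⟩, rfl⟩ := Submodule.Quotient.mk_surjective Slat d
    obtain ⟨u, hu⟩ := (mem_dualOf_iff GrS s).mp hs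
    obtain ⟨z, hz⟩ := hTsurj u
    have hLu : IsUnit (GrL.det) := hLdet
    set x := (GrL⁻¹).mulVec z with hxdef
    have hGrLz : GrL.mulVec x = z := by
      rw [hxdef, Matrix.mulVec_mulVec, Matrix.mul_nonsing_inv _ hLu, Matrix.one_mulVec]
    refine ⟨x, ?_⟩
    rw [hψ]
    have hps : φ0 x = s := by
      simp only [φ0]
      rw [hGrLQdef, cast_mulVec, hGrLz, hMQT, cast_mulVec, hz]
      rw [← hu, hGrSQsymm]
      rw [Matrix.mulVec_mulVec, Matrix.nonsing_inv_mul _ hdetQ, Matrix.one_mulVec]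
    rw [Submodule.mkQ_apply]
    exact congrArg _ (Subtype.ext hps)
  -- generators indexed by the complement of the range of f
  let T : Finset (Fin N) := (Finset.univ.image fun i => snf.f i)ᶜ
  have hcardT : T.card = N - n := by
    rw [Finset.card_compl, Finset.card_image_of_injective _ snf.f.injective]
    simp [hrn]
  let e2 := T.equivFin
  let gens : Fin T.card → discOf GrS (latticeZ n) :=
    fun i => ψ (snf.bM ((e2.symm i) : Fin N))
  have hgen : AddSubgroup.closure (Set.range gens) = ⊤ := by
    rw [eq_top_iff]
    rintro d -
    obtain ⟨x, rfl⟩ := hsurj d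
    have hx : x = ∑ k, snf.bM.repr x k • snf.bM k := (snf.bM.sum_repr x).symm
    rw [hx, map_sum]
    refine AddSubgroup.sum_mem _ fun k _ => ?_
    rw [ψ.map_smul]
    refine AddSubgroup.zsmul_mem _ ?_ _
    by_cases hk : k ∈ T
    · have hg : gens (e2 ⟨k, hk⟩) = ψ (snf.bM k) := by
        simp only [gens, Equiv.symm_apply_apply]
      rw [← hg]
      exact AddSubgroup.subset_closure ⟨_, rfl⟩
    · have hex : ∃ i, snf.f i = k := by
        simp only [T, Finset.mem_compl, Finset.mem_image, Finset.mem_univ, true_and,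
          not_not] at hk
        obtain ⟨i, hi⟩ := hk
        exact ⟨i, hi⟩
      obtain ⟨i, rfl⟩ := hex
      obtain ⟨w, hw⟩ := hmemR i
      rw [hMVL] at hw
      have h0 : ψ (snf.bM (snf.f i)) = 0 := by rw [← hw]; exact hker w
      rw [h0]
      exact zero_mem _
  have hfin : minGens (discOf GrS (latticeZ n)) ≤ T.card := Nat.sInf_le ⟨gens, hgen⟩
  rwa [hcardT] at hfin

/-- `G` has signature `(p, q)`: over `ℝ` it is congruent to the diagonal form with
`p` entries `+1` and `q` entries `-1`. -/
def hasSig (p q : ℕ) (G : Matrix (Fin (p + q)) (Fin (p + q)) ℤ) : Prop :=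
  ∃ P : Matrix (Fin (p + q)) (Fin (p + q)) ℝ, IsUnit P.det ∧
    Pᵀ * (G.map (Int.cast : ℤ → ℝ)) * P =
      Matrix.diagonal (fun i : Fin (p + q) => if (i : ℕ) < p then (1 : ℝ) else -1)

/-- necessity part of conditions (2) in Nikulin's Theorem 1.12.2:
if an even nondegenerate lattice `S` of signature `(tp, tm)` (Gram matrix `GrS`)
admits a primitive embedding into an even unimodular lattice `L` of signature
`(lp, lm)` (Gram matrix `GrL`), then `tp ≤ lp`, `tm ≤ lm`, and the minimal number
of generators of the discriminant group `A_S = S^*/S` satisfies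
`l(A_S) ≤ (lp + lm) − (tp + tm)`. -/
theorem necessity_of_embedding_conditions (tp tm lp lm : ℕ)
    (GrS : Matrix (Fin (tp + tm)) (Fin (tp + tm)) ℤ)
    (GrL : Matrix (Fin (lp + lm)) (Fin (lp + lm)) ℤ)
    (hSsymm : GrS.IsSymm)
    (hSeven : ∀ v : Fin (tp + tm) → ℤ, 2 ∣ v ⬝ᵥ GrS.mulVec v)
    (hSnd : GrS.det ≠ 0)
    (hSsig : hasSig tp tm GrS)
    (hLsymm : GrL.IsSymm)
    (hLeven : ∀ v : Fin (lp + lm) → ℤ, 2 ∣ v ⬝ᵥ GrL.mulVec v)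
    (hLdet : GrL.det = 1 ∨ GrL.det = -1)
    (hLsig : hasSig lp lm GrL)
    (hemb : ∃ M : Matrix (Fin (lp + lm)) (Fin (tp + tm)) ℤ,
      Mᵀ * GrL * M = GrS ∧
      ∀ (v : Fin (lp + lm) → ℤ) (k : ℤ), k ≠ 0 →
        (∃ w, M.mulVec w = k • v) → ∃ w, M.mulVec w = v) :
    tp ≤ lp ∧ tm ≤ lm ∧
    minGens (discOf GrS (latticeZ (tp + tm))) ≤ (lp + lm) - (tp + tm) := by
  classical
  obtain ⟨P, hPu, hP⟩ := hSsig
  obtain ⟨Q, hQu, hQ⟩ := hLsig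
  obtain ⟨M, hM, hprim⟩ := hemb
  set GSR := GrS.map (Int.cast : ℤ → ℝ) with hGSRdef
  set GLR := GrL.map (Int.cast : ℤ → ℝ) with hGLRdef
  set MR := M.map (Int.cast : ℤ → ℝ) with hMRdef
  have hcastR : MRᵀ * GLR * MR = GSR := by
    rw [hGSRdef, hGLRdef, hMRdef, ← hM]
    simp only [map_cast_eqR]
    rw [Matrix.map_mul, Matrix.map_mul, Matrix.transpose_map]
  have hQQ : (Q⁻¹)ᵀ * Qᵀ = 1 := by
    rw [← Matrix.transpose_mul, Matrix.mul_nonsing_inv _ hQu, Matrix.transpose_one]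
  have h1 : Q * (Q⁻¹ * (MR * P)) = MR * P := by
    rw [← Matrix.mul_assoc, Matrix.mul_nonsing_inv _ hQu, Matrix.one_mul]
  have h2 : (Q⁻¹)ᵀ * (Qᵀ * (GLR * (MR * P))) = GLR * (MR * P) := by
    rw [← Matrix.mul_assoc, hQQ, Matrix.one_mul]
  have h3 : MRᵀ * (GLR * (MR * P)) = GSR * P := by
    rw [← Matrix.mul_assoc, ← Matrix.mul_assoc, hcastR]
  have hC : (Q⁻¹ * MR * P)ᵀ
        * (Matrix.diagonal fun i : Fin (lp + lm) => if (i : ℕ) < lp then (1 : ℝ) else -1)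
        * (Q⁻¹ * MR * P)
      = Matrix.diagonal fun i : Fin (tp + tm) => if (i : ℕ) < tp then (1 : ℝ) else -1 := by
    rw [← hQ]
    simp only [Matrix.transpose_mul, Matrix.mul_assoc]
    rw [h1, h2, h3, ← Matrix.mul_assoc, hP]
  obtain ⟨htp, htm⟩ := sig_le (Q⁻¹ * MR * P) hC
  refine ⟨htp, htm, ?_⟩
  refine minGens_le_of_embedding GrS GrL M hSsymm hSnd ?_ hM hprim
  rcases hLdet with h | h
  · rw [h]; exact isUnit_one
  · rw [h]; exact IsUnit.neg isUnit_one
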